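/- Let μ be a partition with l(μ) parts and let L be the linear operator on ℤ[q^{±1}, t^{±1}] defined on monomials by L(t^i q^j) = t^i q^j if i ≤ 0 and L(t^i q^j) = 0 if i > 0. With z_i(μ) = t^{-l(μ)+i} q^{μ_i} and K̃_μ = (1-t)·Σ_{i,j=1}^{l(μ)} z_i(μ)/z_j(μ), one has L(K̃_μ) = (q^{-1}-1)·Σ_{□∈μ} q^{a_μ(□)+1} t^{-l_μ(□)} + Σ_{i=1}^{l(μ)} z_i(μ). -/

import Mathlib

open Finset

/-- A partition: weakly decreasing sequence of naturals, with `len` nonzero parts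
(0-based indexing: `part 0 = μ₁`). -/
structure YDPartition where
  part : ℕ → ℕ
  len : ℕ
  antitone : ∀ ⦃i j : ℕ⦄, i ≤ j → part j ≤ part i
  pos_iff : ∀ i, i < len ↔ 0 < part i

/-- Height of the (0-based) column `c` of the Young diagram. -/
def colHeight (p : ℕ → ℕ) (l c : ℕ) : ℕ :=
  ((Finset.range l).filter (fun r => c < p r)).card

/-- Arm length of the cell in (0-based) row `r`, column `c`. -/
def armZ (p : ℕ → ℕ) (r c : ℕ) : ℤ := (p r : ℤ) - 1 - c

/-- Leg length of the cell in (0-based) row `r`, column `c`. -/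
def legZ (p : ℕ → ℕ) (l r c : ℕ) : ℤ :=
  (colHeight p l c : ℤ) - 1 - r

/-- The Laurent polynomial ring `ℤ[q^{±1}, t^{±1}]`, realized as the group algebra of
`ℤ × ℤ` over `ℤ`. -/
abbrev Lp : Type := AddMonoidAlgebra ℤ (ℤ × ℤ)

/-- The monomial `tⁱ qʲ`. -/
noncomputable def M (i j : ℤ) : Lp := AddMonoidAlgebra.single (i, j) 1

/-- The truncation operator `L(tⁱ qʲ) = tⁱ qʲ` if `i ≤ 0` and `0` otherwise. -/
noncomputable def Ltrunc (x : Lp) : Lp :=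
  AddMonoidAlgebra.ofCoeff (Finsupp.filter (fun p : ℤ × ℤ => p.1 ≤ 0) x.coeff)

lemma M_mul (a b c d : ℤ) : M a b * M c d = M (a+c) (b+d) := by
  simp [M, AddMonoidAlgebra.single_mul_single, Prod.mk_add_mk]

lemma M_congr {a b c d : ℤ} (h1 : a = c) (h2 : b = d) : M a b = M c d := by rw [h1, h2]

lemma Msub_congr {a b c d a' b' c' d' : ℤ} (h1 : a = a') (h2 : b = b') (h3 : c = c')
    (h4 : d = d') : M a b - M c d = M a' b' - M c' d' := by rw [h1, h2, h3, h4]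

noncomputable def LtruncHom : Lp →+ Lp where
  toFun := Ltrunc
  map_zero' := congrArg AddMonoidAlgebra.ofCoeff (Finsupp.filter_zero _)
  map_add' x y := by
    unfold Ltrunc
    rw [AddMonoidAlgebra.coeff_add, Finsupp.filter_add, AddMonoidAlgebra.ofCoeff_add]

lemma LtruncHom_M (a b : ℤ) : LtruncHom (M a b) = if a ≤ 0 then M a b else 0 := by
  show Ltrunc (M a b) = _
  unfold Ltrunc M
  rw [AddMonoidAlgebra.coeff_single]
  split_ifs with h
  · exact congrArg AddMonoidAlgebra.ofCoeff (Finsupp.filter_single_of_pos _ h)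
  · exact congrArg AddMonoidAlgebra.ofCoeff (Finsupp.filter_single_of_neg _ h)

lemma telescope (a A : ℤ) (m n : ℕ) (h : m ≤ n) :
    ∑ c ∈ Finset.Ico m n, (M a (A - c - 1) - M a (A - c)) = M a (A - n) - M a (A - m) := by
  have step : ∀ c ∈ Finset.Ico m n, (M a (A - c - 1) - M a (A - c))
      = (fun k : ℕ => M a (A - k)) (c+1) - (fun k : ℕ => M a (A - k)) c := by
    intro c _
    simp only
    rw [sub_left_inj]
    exact M_congr rfl (by push_cast; ring)
  rw [Finset.sum_congr rfl step, Finset.sum_Ico_eq_sub _ h,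
    Finset.sum_range_sub (fun k : ℕ => M a (A - k)), Finset.sum_range_sub (fun k : ℕ => M a (A - k))]
  simp only [Nat.cast_zero]
  abel

lemma sum_range_decomp (p : ℕ → ℕ) (hanti : ∀ ⦃i j : ℕ⦄, i ≤ j → p j ≤ p i)
    (F : ℕ → Lp) : ∀ (n r : ℕ), p (r + n) = 0 →
    ∑ c ∈ range (p r), F c = ∑ k ∈ Finset.Ico r (r+n), ∑ c ∈ Finset.Ico (p (k+1)) (p k), F c := by
  intro n
  induction n with
  | zero => intro r h; rw [Nat.add_zero] at h; simp [h]
  | succ n ih =>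
    intro r h
    have h1 : p (r+1) ≤ p r := hanti (Nat.le_succ r)
    have key : ∑ c ∈ range (p r), F c
        = ∑ c ∈ range (p (r+1)), F c + ∑ c ∈ Finset.Ico (p (r+1)) (p r), F c := by
      simp only [range_eq_Ico]
      exact (Finset.sum_Ico_consecutive F (Nat.zero_le _) h1).symm
    rw [key, ih (r+1) (by rw [show r+1+n = r+(n+1) by ring]; exact h),
      Finset.sum_eq_sum_Ico_succ_bot (by omega : r < r + (n+1)),
      show r+1+n = r+(n+1) by ring]
    abel

lemma colHeight_eq (p : ℕ → ℕ) (hanti : ∀ ⦃i j : ℕ⦄, i ≤ j → p j ≤ p i)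
    {l k c : ℕ} (hk : k < l) (h1 : p (k+1) ≤ c) (h2 : c < p k) :
    colHeight p l c = k + 1 := by
  unfold colHeight
  have hs : (range l).filter (fun r => c < p r) = range (k+1) := by
    ext i
    simp only [mem_filter, mem_range]
    constructor
    · rintro ⟨_, hci⟩
      by_contra hi
      have : p i ≤ c := le_trans (hanti (by omega)) h1
      omega
    · intro hi
      exact ⟨by omega, lt_of_lt_of_le h2 (hanti (by omega))⟩
  rw [hs, card_range]

/-- with `z_i(μ) = t^{-l(μ)+i} q^{μ_i}` and
`K̃_μ = (1-t)·Σ_{i,j=1}^{l(μ)} z_i(μ)/z_j(μ)`, one has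
`L(K̃_μ) = (q⁻¹-1)·Σ_{□∈μ} q^{a_μ(□)+1} t^{-l_μ(□)} + Σ_{i=1}^{l(μ)} z_i(μ)`
(note `z_i(μ)/z_j(μ) = t^{i-j} q^{μ_i-μ_j}`). -/
theorem Ltrunc_Ktilde (μ : YDPartition) :
    Ltrunc ((1 - M 1 0) *
        ∑ i ∈ range μ.len, ∑ j ∈ range μ.len,
          M ((i : ℤ) - j) ((μ.part i : ℤ) - μ.part j)) =
      (M 0 (-1) - 1) *
          (∑ r ∈ range μ.len, ∑ c ∈ range (μ.part r),
            M (-(legZ μ.part μ.len r c)) (armZ μ.part r c + 1)) +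
        ∑ i ∈ range μ.len, M ((i : ℤ) + 1 - μ.len) (μ.part i : ℤ) := by
  obtain ⟨p, l, hanti, hpos⟩ := μ
  dsimp only
  have hpl : p l = 0 := by
    by_contra h
    exact absurd ((hpos l).mpr (Nat.pos_of_ne_zero h)) (lt_irrefl l)
  -- LHS
  have expand : (1 - M 1 0) * ∑ i ∈ range l, ∑ j ∈ range l, M ((i:ℤ)-j) ((p i:ℤ)-p j)
      = ∑ i ∈ range l, ∑ j ∈ range l,
          (M ((i:ℤ)-j) ((p i:ℤ)-p j) - M ((i:ℤ)-j+1) ((p i:ℤ)-p j)) := by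
    rw [sub_mul, one_mul, Finset.mul_sum, ← Finset.sum_sub_distrib]
    refine Finset.sum_congr rfl fun i _ => ?_
    rw [Finset.mul_sum, ← Finset.sum_sub_distrib]
    refine Finset.sum_congr rfl fun j _ => ?_
    rw [M_mul]
    exact Msub_congr rfl rfl (by ring) (by ring)
  have hLHS : Ltrunc ((1 - M 1 0) * ∑ i ∈ range l, ∑ j ∈ range l, M ((i:ℤ)-j) ((p i:ℤ)-p j))
      = (∑ i ∈ range l, ∑ j ∈ Finset.Ico i l, M ((i:ℤ)-j) ((p i:ℤ)-p j))
        - ∑ i ∈ range l, ∑ j ∈ Finset.Ico (i+1) l, M ((i:ℤ)-j+1) ((p i:ℤ)-p j) := by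
    rw [expand, show Ltrunc = ⇑LtruncHom from rfl, map_sum]
    simp only [map_sum, map_sub, LtruncHom_M]
    rw [← Finset.sum_sub_distrib]
    refine Finset.sum_congr rfl fun i _ => ?_
    rw [Finset.sum_sub_distrib]
    congr 1
    · rw [← Finset.sum_filter]
      apply Finset.sum_congr _ (fun _ _ => rfl)
      ext j
      simp only [mem_filter, mem_range, Finset.mem_Ico, sub_nonpos, Nat.cast_le]
      omega
    · rw [← Finset.sum_filter]
      apply Finset.sum_congr _ (fun _ _ => rfl)
      ext j
      simp only [mem_filter, mem_range, Finset.mem_Ico]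
      omega
  -- RHS first term
  have hRfirst : (M 0 (-1) - 1) * (∑ r ∈ range l, ∑ c ∈ range (p r),
        M (-(legZ p l r c)) (armZ p r c + 1))
      = ∑ r ∈ range l, ∑ k ∈ Finset.Ico r l,
          (M ((r:ℤ)-k) ((p r:ℤ) - p k) - M ((r:ℤ)-k) ((p r:ℤ) - p (k+1))) := by
    rw [Finset.mul_sum]
    refine Finset.sum_congr rfl fun r hr => ?_
    have hr' : r < l := mem_range.mp hr
    rw [Finset.mul_sum]
    have step1 : ∀ c ∈ range (p r), (M 0 (-1) - 1) * M (-(legZ p l r c)) (armZ p r c + 1)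
        = M ((r:ℤ)+1 - colHeight p l c) ((p r:ℤ) - c - 1)
          - M ((r:ℤ)+1 - colHeight p l c) ((p r:ℤ) - c) := by
      intro c _
      rw [sub_mul, one_mul, M_mul]
      unfold legZ armZ
      exact Msub_congr (by ring) (by ring) (by ring) (by ring)
    rw [Finset.sum_congr rfl step1,
      sum_range_decomp p hanti _ (l - r) r (by rw [show r + (l-r) = l by omega]; exact hpl),
      show r + (l - r) = l by omega]
    refine Finset.sum_congr rfl fun k hk => ?_
    obtain ⟨hk1, hk2⟩ := Finset.mem_Ico.mp hk
    have hcol : ∀ c ∈ Finset.Ico (p (k+1)) (p k),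
        (M ((r:ℤ)+1 - colHeight p l c) ((p r:ℤ) - c - 1)
          - M ((r:ℤ)+1 - colHeight p l c) ((p r:ℤ) - c))
        = (M ((r:ℤ)-k) ((p r:ℤ) - c - 1) - M ((r:ℤ)-k) ((p r:ℤ) - c)) := by
      intro c hc
      obtain ⟨h1, h2⟩ := Finset.mem_Ico.mp hc
      rw [colHeight_eq p hanti hk2 h1 h2]
      exact Msub_congr (by push_cast; ring) rfl (by push_cast; ring) rfl
    rw [Finset.sum_congr rfl hcol, telescope _ _ _ _ (hanti (Nat.le_succ k))]
  -- shift lemma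
  have hshift : ∀ r ∈ range l, ∑ k ∈ Finset.Ico r l, M ((r:ℤ)-k) ((p r:ℤ) - p (k+1))
      = (∑ j ∈ Finset.Ico (r+1) l, M ((r:ℤ)-j+1) ((p r:ℤ) - p j)) + M ((r:ℤ)+1-l) (p r) := by
    intro r hr
    have hr' : r < l := mem_range.mp hr
    have hsh : ∑ k ∈ Finset.Ico r l, M ((r:ℤ)-k) ((p r:ℤ) - p (k+1))
        = ∑ j ∈ Finset.Ico (r+1) (l+1), M ((r:ℤ)-j+1) ((p r:ℤ) - p j) := by
      rw [← Finset.sum_Ico_add' (fun j : ℕ => M ((r:ℤ)-(j:ℤ)+1) ((p r:ℤ) - p j)) r l 1]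
      refine Finset.sum_congr rfl fun k _ => ?_
      exact M_congr (by push_cast; ring) rfl
    rw [hsh, Finset.sum_Ico_succ_top (by omega : r+1 ≤ l), hpl]
    congr 1
    exact M_congr (by ring) (by push_cast; ring)
  -- combine
  rw [hLHS, hRfirst]
  simp only [Finset.sum_sub_distrib]
  rw [Finset.sum_congr rfl hshift, Finset.sum_add_distrib]
  abel
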